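/- Let S be a discrete semigroup and A ⊆ S. If there exists s ∈ S such that s⁻¹A is central (i.e., s⁻¹A ∈ e for some idempotent e in the smallest ideal K of βS), then A is piecewise syndetic. -/
import Mathlib


attribute [local instance] Ultrafilter.mul Ultrafilter.semigroup

/-- `J` is a (nonempty) two-sided ideal of `βS`. -/
def IsIdealBS {S : Type*} [Semigroup S] (J : Set (Ultrafilter S)) : Prop :=
  J.Nonempty ∧ ∀ p ∈ J, ∀ q : Ultrafilter S, q * p ∈ J ∧ p * q ∈ J

/-- `K` is the smallest two-sided ideal of `βS`. -/
def IsSmallestIdealBS {S : Type*} [Semigroup S] (K : Set (Ultrafilter S)) : Prop :=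
  IsIdealBS K ∧ ∀ J : Set (Ultrafilter S), IsIdealBS J → K ⊆ J

/-- `B ⊆ S` is syndetic. -/
def SyndeticIn {S : Type*} [Semigroup S] (B : Set S) : Prop :=
  ∃ F : Finset S, ∀ t : S, ∃ s ∈ F, s * t ∈ B

/-- `A ⊆ S` is piecewise syndetic. -/
def PiecewiseSyndeticIn {S : Type*} [Semigroup S] (A : Set S) : Prop :=
  ∃ F : Finset S, ∀ G : Finset S,
    (⋂ s ∈ G, {t : S | ∃ u ∈ F, u * (s * t) ∈ A}).Nonempty

section Aux

variable {S : Type*} [Semigroup S]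

/-- Membership in a product of ultrafilters. -/
lemma mem_ultra_mul {A : Set S} {p q : Ultrafilter S} :
    A ∈ p * q ↔ {t : S | {w : S | t * w ∈ A} ∈ q} ∈ p :=
  Iff.rfl

/-- A closed left ideal of `βS`. -/
def IsCLI (L : Set (Ultrafilter S)) : Prop :=
  L.Nonempty ∧ IsClosed L ∧ ∀ p ∈ L, ∀ q : Ultrafilter S, q * p ∈ L

lemma exists_min_cli {L₀ : Set (Ultrafilter S)} (h₀ : IsCLI L₀) :
    ∃ m, m ⊆ L₀ ∧ Minimal IsCLI m := by
  apply zorn_superset_nonempty (setOf IsCLI) ?_ L₀ h₀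
  intro c hc hchain hne
  refine ⟨⋂₀ c, ⟨?_, isClosed_sInter fun L hL => (hc hL).2.1, ?_⟩,
    fun s hs => Set.sInter_subset_of_mem hs⟩
  · haveI : Nonempty c := hne.to_subtype
    exact IsCompact.nonempty_sInter_of_directed_nonempty_isCompact_isClosed
      (fun L₁ h₁ L₂ h₂ => by
        rcases eq_or_ne L₁ L₂ with rfl | hne
        · exact ⟨L₁, h₁, subset_rfl, subset_rfl⟩
        · rcases hchain h₁ h₂ hne with hsub | hsub
          · exact ⟨L₁, h₁, subset_rfl, hsub⟩
          · exact ⟨L₂, h₂, hsub, subset_rfl⟩)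
      (fun L hL => (hc hL).1)
      (fun L hL => (hc hL).2.1.isCompact) (fun L hL => (hc hL).2.1)
  · intro p hp q L hL
    exact (hc hL).2.2 p (Set.mem_sInter.1 hp L hL) q

lemma cli_range_mul (a : Ultrafilter S) : IsCLI (Set.range (· * a)) :=
  ⟨⟨a * a, a, rfl⟩, (isCompact_range (Ultrafilter.continuous_mul_left a)).isClosed,
    fun p hp q => by
      obtain ⟨x, rfl⟩ := hp
      exact ⟨q * x, mul_assoc q x a⟩⟩

lemma cli_image {L : Set (Ultrafilter S)} (h : IsCLI L) (x : Ultrafilter S) :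
    IsCLI ((· * x) '' L) := by
  refine ⟨h.1.image _, ((h.2.1.isCompact).image (Ultrafilter.continuous_mul_left x)).isClosed,
    fun p hp q => ?_⟩
  obtain ⟨l, hl, rfl⟩ := hp
  exact ⟨q * l, h.2.2 l hl q, mul_assoc q l x⟩

lemma minimal_cli_image {L : Set (Ultrafilter S)} (h : Minimal IsCLI L) (x : Ultrafilter S) :
    Minimal IsCLI ((· * x) '' L) := by
  refine ⟨cli_image h.1 x, fun I hI hIle => ?_⟩
  -- L' = elements of L sent into I
  have hL' : IsCLI (L ∩ (· * x) ⁻¹' I) := by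
    refine ⟨?_, h.1.2.1.inter (hI.2.1.preimage (Ultrafilter.continuous_mul_left x)), ?_⟩
    · obtain ⟨i, hi⟩ := hI.1
      obtain ⟨l, hl, rfl⟩ := hIle hi
      exact ⟨l, hl, hi⟩
    · intro p hp q
      exact ⟨h.1.2.2 p hp.1 q,
        by simpa [Set.mem_preimage, mul_assoc] using hI.2.2 (p * x) hp.2 q⟩
  have := h.2 hL' Set.inter_subset_left
  rintro y ⟨l, hl, rfl⟩
  exact (this hl).2

/-- Every element of the smallest two-sided ideal lies in a minimal closed left ideal. -/
lemma mem_minimal_cli_of_mem_smallest [Nonempty S] {K : Set (Ultrafilter S)}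
    (hK : IsSmallestIdealBS K) {e : Ultrafilter S} (he : e ∈ K) :
    ∃ L, Minimal IsCLI L ∧ e ∈ L := by
  set M : Set (Ultrafilter S) := {p | ∃ L, Minimal IsCLI L ∧ p ∈ L} with hM
  have hMideal : IsIdealBS M := by
    constructor
    · obtain ⟨m, _, hm⟩ := exists_min_cli
        (L₀ := (Set.univ : Set (Ultrafilter S)))
        ⟨Set.univ_nonempty, isClosed_univ, fun _ _ _ => Set.mem_univ _⟩
      obtain ⟨p, hp⟩ := hm.1.1
      exact ⟨p, m, hm, hp⟩
    · rintro p ⟨L, hL, hpL⟩ q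
      constructor
      · exact ⟨L, hL, hL.1.2.2 p hpL q⟩
      · exact ⟨(· * q) '' L, minimal_cli_image hL q, ⟨p, hpL, rfl⟩⟩
  obtain ⟨L, hL, heL⟩ := hK.2 M hMideal he
  exact ⟨L, hL, heL⟩

end Aux

theorem piecewise_syndetic_of_central_translate {S : Type*} [Semigroup S]
    (K : Set (Ultrafilter S)) (hK : IsSmallestIdealBS K) (A : Set S)
    (h : ∃ s : S, ∃ e : Ultrafilter S, e ∈ K ∧ e * e = e ∧ {t : S | s * t ∈ A} ∈ e) :
    PiecewiseSyndeticIn A := by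
  obtain ⟨s, e, heK, hee, hA'⟩ := h
  haveI : Nonempty S := ⟨s⟩
  set A' : Set S := {t : S | s * t ∈ A} with hA'def
  set T : Set S := {t : S | {w : S | t * w ∈ A'} ∈ e} with hTdef
  -- Step 1: T is syndetic.
  have hsyn : SyndeticIn T := by
    by_contra hns
    rw [SyndeticIn] at hns
    push_neg at hns
    -- hns : ∀ F : Finset S, ∃ t, ∀ u ∈ F, u * t ∉ T
    set 𝒮 : Set (Set S) := Set.range (fun u : S => {t : S | u * t ∈ T}ᶜ) with h𝒮
    have hgen : (Filter.generate 𝒮).NeBot := by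
      rw [Filter.generate_neBot_iff]
      intro t ht hfin
      classical
      set g : Set S → S := fun B => if hB : ∃ u : S, B = {t : S | u * t ∈ T}ᶜ
        then hB.choose else Classical.arbitrary S with hg
      have hgspec : ∀ B ∈ t, B = {w : S | g B * w ∈ T}ᶜ := by
        intro B hB
        obtain ⟨u, hu⟩ := ht hB
        have hex : ∃ u : S, B = {t : S | u * t ∈ T}ᶜ := ⟨u, hu.symm⟩
        simpa [hg, hex] using hex.choose_spec
      obtain ⟨t₀, ht₀⟩ := hns ((hfin.image g).toFinset)
      refine ⟨t₀, Set.mem_sInter.2 fun B hB => ?_⟩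
      rw [hgspec B hB]
      exact ht₀ (g B) ((hfin.image g).mem_toFinset.2 ⟨B, hB, rfl⟩)
    set q : Ultrafilter S := @Ultrafilter.of _ _ hgen with hqdef
    have hq : ∀ u : S, {t : S | u * t ∈ T} ∉ q := by
      intro u
      rw [← Ultrafilter.compl_mem_iff_notMem]
      exact Filter.le_def.mp (@Ultrafilter.of_le _ _ hgen) _ (Filter.mem_generate_of_mem (Set.mem_range_self u))
    -- e lies in a minimal closed left ideal L
    obtain ⟨L, hL, heL⟩ := mem_minimal_cli_of_mem_smallest hK heK
    have hqeL : q * e ∈ L := hL.1.2.2 e heL q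
    have hRL : Set.range (· * (q * e)) ⊆ L := by
      rintro y ⟨x, rfl⟩
      exact hL.1.2.2 (q * e) hqeL x
    have hLR := hL.2 (cli_range_mul (q * e)) hRL
    obtain ⟨x, hx⟩ := hLR heL
    have hx' : x * (q * e) = e := hx
    have h1 : A' ∈ x * (q * e) := by rw [hx']; exact hA'
    rw [mem_ultra_mul] at h1
    obtain ⟨a, ha⟩ := Ultrafilter.nonempty_of_mem h1
    rw [Set.mem_setOf_eq, mem_ultra_mul] at ha
    have : {b : S | {w : S | b * w ∈ {c : S | a * c ∈ A'}} ∈ e} = {b : S | a * b ∈ T} := by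
      ext b
      simp only [Set.mem_setOf_eq, hTdef, mul_assoc]
    rw [this] at ha
    exact hq a ha
  -- Step 2: conclude piecewise syndeticity.
  obtain ⟨F, hF⟩ := hsyn
  classical
  refine ⟨F.image (fun v => s * v), fun G => ?_⟩
  have hv : ∀ g : S, ∃ v ∈ F, {w : S | (v * g) * w ∈ A'} ∈ e := fun g => hF g
  choose v hvF hvT using hv
  have hW : (⋂ g ∈ G, {w : S | (v g * g) * w ∈ A'}) ∈ (e : Filter S) :=
    (Filter.biInter_finset_mem G).2 fun g _ => hvT g
  obtain ⟨t, ht⟩ := Ultrafilter.nonempty_of_mem hW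
  refine ⟨t, Set.mem_iInter₂.2 fun g hg => ?_⟩
  have h1 : (v g * g) * t ∈ A' := Set.mem_iInter₂.1 ht g hg
  refine ⟨s * v g, Finset.mem_image_of_mem _ (hvF g), ?_⟩
  have : s * ((v g * g) * t) ∈ A := h1
  simpa [mul_assoc] using this
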